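/- Define H : ℝ → ℝ by H(a) = artanh(2a) − artanh(a·√(4a² + 3)) + artanh(a·√(2a² + 1)) − artanh(a), where artanh is the inverse hyperbolic tangent. Then H(0) = 0 and H is differentiable at 0 with derivative H′(0) = 2 − √3; in particular H′(0) ≠ 0. -/

import Mathlib

/-- The inverse hyperbolic tangent. -/
noncomputable def artanh (x : ℝ) : ℝ := (1 / 2) * Real.log ((1 + x) / (1 - x))

lemma artanh_zero : artanh 0 = 0 := by simp [artanh]

lemma hasDerivAt_artanh_zero : HasDerivAt artanh 1 0 := by
  have h1 : HasDerivAt (fun x : ℝ => (1 + x) / (1 - x)) 2 0 := by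
    have hn : HasDerivAt (fun x : ℝ => 1 + x) 1 0 := by
      simpa using (hasDerivAt_id (0:ℝ)).const_add 1
    have hd : HasDerivAt (fun x : ℝ => 1 - x) (-1) 0 := by
      simpa using (hasDerivAt_id (0:ℝ)).const_sub 1
    have := hn.div hd (by norm_num)
    norm_num at this
    exact this
  have h2 : HasDerivAt (fun x : ℝ => Real.log ((1 + x) / (1 - x))) 2 0 := by
    have := (Real.hasDerivAt_log (by norm_num : ((1:ℝ)+0)/(1-0) ≠ 0)).comp 0 h1
    norm_num at this
    exact this
  have := h2.const_mul (1/2 : ℝ)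
  norm_num at this
  exact this

lemma artanh_comp {g : ℝ → ℝ} {c : ℝ} (hg0 : g 0 = 0) (hg : HasDerivAt g c 0) :
    HasDerivAt (fun a => artanh (g a)) c 0 := by
  have := hasDerivAt_artanh_zero
  rw [← hg0] at this
  have h := this.comp 0 hg
  rw [one_mul] at h
  exact h

lemma inner_deriv (b c : ℝ) (hc : 0 < c) :
    HasDerivAt (fun a : ℝ => a * Real.sqrt (b * a ^ 2 + c)) (Real.sqrt c) 0 := by
  have hi : HasDerivAt (fun a : ℝ => b * a ^ 2 + c) 0 0 := by
    have := ((hasDerivAt_pow 2 (0:ℝ)).const_mul b).add_const c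
    norm_num at this
    exact this.add_const c
  have hs : HasDerivAt (fun a : ℝ => Real.sqrt (b * a ^ 2 + c)) 0 0 := by
    have h0 : b * (0:ℝ) ^ 2 + c ≠ 0 := by norm_num; linarith
    have := (Real.hasDerivAt_sqrt h0).comp 0 hi
    norm_num at this
    exact this
  have := (hasDerivAt_id (0:ℝ)).mul hs
  norm_num at this
  exact this

theorem holonomy_deriv_at_zero :
    (fun a : ℝ => artanh (2 * a) - artanh (a * Real.sqrt (4 * a ^ 2 + 3)) +
        artanh (a * Real.sqrt (2 * a ^ 2 + 1)) - artanh a) 0 = 0 ∧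
      HasDerivAt
        (fun a : ℝ => artanh (2 * a) - artanh (a * Real.sqrt (4 * a ^ 2 + 3)) +
          artanh (a * Real.sqrt (2 * a ^ 2 + 1)) - artanh a)
        (2 - Real.sqrt 3) 0 ∧
      (2 - Real.sqrt 3 : ℝ) ≠ 0 := by
  refine ⟨by simp [artanh_zero], ?_, ?_⟩
  · have h1 : HasDerivAt (fun a : ℝ => artanh (2 * a)) 2 0 := by
      have : HasDerivAt (fun a : ℝ => 2 * a) 2 0 := by
        simpa using (hasDerivAt_id (0:ℝ)).const_mul 2
      exact artanh_comp (by norm_num) this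
    have h2 : HasDerivAt (fun a : ℝ => artanh (a * Real.sqrt (4 * a ^ 2 + 3)))
        (Real.sqrt 3) 0 := artanh_comp (by norm_num) (inner_deriv 4 3 (by norm_num))
    have h3 : HasDerivAt (fun a : ℝ => artanh (a * Real.sqrt (2 * a ^ 2 + 1)))
        1 0 := by
      have := artanh_comp (g := fun a : ℝ => a * Real.sqrt (2 * a ^ 2 + 1))
        (by norm_num) (inner_deriv 2 1 (by norm_num))
      simpa using this
    have h4 : HasDerivAt (fun a : ℝ => artanh a) 1 0 := hasDerivAt_artanh_zero
    have := ((h1.sub h2).add h3).sub h4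
    have heq : 2 - Real.sqrt 3 + 1 - 1 = 2 - Real.sqrt 3 := by ring
    rw [heq] at this
    exact this
  · have h3 : Real.sqrt 3 < 2 := by
      nlinarith [Real.sq_sqrt (by norm_num : (3:ℝ) ≥ 0), Real.sqrt_nonneg 3]
    linarith
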